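/- arXiv:1105.1728 — 3 statements merged into one kernel-verified Lean document; each statement's English description precedes it below -/
import Mathlib

section
/- Let ℓ₁, …, ℓ_N ∈ ℤ^d and let K∞ be the smallest subset of ℤ^d containing {0, ℓ₁, …, ℓ_N} and closed under (m,n) ↦ 2m − n. Then K∞ equals the set of all integer linear combinations ∑ α_s ℓ_s in which at most one coefficient α_s is odd. -/
private lemma shift_mem {d : ℕ} {K : Set (Fin d → ℤ)}
    (h0 : (0 : Fin d → ℤ) ∈ K)
    (hK : ∀ m ∈ K, ∀ n ∈ K, (2 : ℤ) • m - n ∈ K)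
    {g : Fin d → ℤ} (hg : g ∈ K) (k : ℤ) :
    ∀ x ∈ K, x + (2 * k) • g ∈ K := by
  induction k using Int.induction_on with
  | zero => simpa using fun x hx => hx
  | succ k ih =>
      intro x hx
      have h1 : (2:ℤ) • (0 : Fin d → ℤ) - x ∈ K := hK 0 h0 x hx
      have hx' : x + (2:ℤ) • g ∈ K := by
        have h2 := hK g hg _ h1
        have heq : (2:ℤ) • g - ((2:ℤ) • (0 : Fin d → ℤ) - x) = x + (2:ℤ) • g := by
          simp [two_smul]; abel
        rwa [heq] at h2
      have h3 := ih _ hx'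
      convert h3 using 1
      ext i
      simp only [Pi.add_apply, Pi.smul_apply, smul_eq_mul]
      push_cast
      ring
  | pred k ih =>
      intro x hx
      have h1 : (2:ℤ) • g - x ∈ K := hK g hg x hx
      have hx' : x - (2:ℤ) • g ∈ K := by
        have h2 := hK 0 h0 _ h1
        have heq : (2:ℤ) • (0 : Fin d → ℤ) - ((2:ℤ) • g - x) = x - (2:ℤ) • g := by
          rw [smul_zero, zero_sub, neg_sub]
        rwa [heq] at h2
      have h3 := ih _ hx'
      convert h3 using 1
      ext i
      simp only [Pi.add_apply, Pi.sub_apply, Pi.smul_apply, smul_eq_mul]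
      push_cast
      ring

private lemma even_sum_mem {d N : ℕ} (ℓ : Fin N → (Fin d → ℤ)) {K : Set (Fin d → ℤ)}
    (h0 : (0 : Fin d → ℤ) ∈ K)
    (hK : ∀ m ∈ K, ∀ n ∈ K, (2 : ℤ) • m - n ∈ K)
    (hgen : ∀ s, ℓ s ∈ K) (α : Fin N → ℤ) :
    ∀ x ∈ K, x + ∑ s, (2 * α s) • ℓ s ∈ K := by
  classical
  suffices h : ∀ t : Finset (Fin N), ∀ x ∈ K, x + ∑ s ∈ t, (2 * α s) • ℓ s ∈ K from
    h Finset.univ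
  intro t
  induction t using Finset.induction_on with
  | empty => simpa using fun x hx => hx
  | insert _ _ ha ih =>
      rename_i a t'
      intro x hx
      rw [Finset.sum_insert ha, ← add_assoc]
      exact ih _ (shift_mem h0 hK (hgen a) (α a) x hx)

/-- For `ℓ₁, …, ℓ_N ∈ ℤ^d`, the smallest subset of `ℤ^d` containing `{0, ℓ₁, …, ℓ_N}`
and closed under `(m, n) ↦ 2•m - n` equals the set of all integer linear combinations
`∑ α_s • ℓ_s` with at most one odd coefficient. -/
theorem closure_eq_combinations_at_most_one_odd (d N : ℕ) (ℓ : Fin N → (Fin d → ℤ)) :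
    ⋂₀ {K : Set (Fin d → ℤ) |
        insert (0 : Fin d → ℤ) (Set.range ℓ) ⊆ K ∧
        ∀ m ∈ K, ∀ n ∈ K, (2 : ℤ) • m - n ∈ K} =
      {v : Fin d → ℤ | ∃ α : Fin N → ℤ,
        v = ∑ s, α s • ℓ s ∧ {s : Fin N | Odd (α s)}.Subsingleton} := by
  classical
  apply subset_antisymm
  · -- ⋂ ⊆ C : show C is in the family
    intro v hv
    apply hv
    constructor
    · intro x hx
      rcases hx with hx | ⟨t, rfl⟩
      · exact ⟨0, by simp [hx], by simp [Set.Subsingleton]⟩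
      · refine ⟨fun s => if s = t then 1 else 0, ?_, ?_⟩
        · simp [ite_smul]
        · intro a ha b hb
          simp only [Set.mem_setOf_eq] at ha hb
          split_ifs at ha with h1
          · split_ifs at hb with h2
            · rw [h1, h2]
            · norm_num at hb
          · norm_num at ha
    · rintro m ⟨α, rfl, hα⟩ n ⟨β, rfl, hβ⟩
      refine ⟨fun s => 2 * α s - β s, ?_, ?_⟩
      · rw [Finset.smul_sum, ← Finset.sum_sub_distrib]
        congr 1; ext s
        rw [sub_smul, mul_smul]
      · have hodd : ∀ s, Odd (2 * α s - β s) ↔ Odd (β s) := by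
          intro s; rw [Int.odd_iff, Int.odd_iff]; omega
        intro a ha b hb
        simp only [Set.mem_setOf_eq, hodd] at ha hb
        exact hβ ha hb
  · -- C ⊆ ⋂
    rintro v ⟨α, rfl, hα⟩ K ⟨hsub, hK⟩
    have h0 : (0 : Fin d → ℤ) ∈ K := hsub (by simp)
    have hgen : ∀ s, ℓ s ∈ K := fun s => hsub (Set.mem_insert_of_mem _ ⟨s, rfl⟩)
    by_cases h : ∀ s, Even (α s)
    · choose β hβ using h
      have heq : ∑ s, α s • ℓ s = 0 + ∑ s, (2 * β s) • ℓ s := by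
        rw [zero_add]; congr 1; ext s; rw [hβ s, two_mul]
      rw [heq]
      exact even_sum_mem ℓ h0 hK hgen β 0 h0
    · push_neg at h
      obtain ⟨s₀, hs₀⟩ := h
      rw [Int.not_even_iff_odd] at hs₀
      have heven : ∀ s, s ≠ s₀ → Even (α s) := by
        intro s hs
        by_contra hodd
        rw [Int.not_even_iff_odd] at hodd
        exact hs (hα hodd hs₀)
      have hcoef : ∀ s, ∃ b : ℤ, α s = (if s = s₀ then 1 else 0) + 2 * b := by
        intro s
        by_cases hs : s = s₀
        · rw [if_pos hs, hs]
          obtain ⟨c, hc⟩ := hs₀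
          exact ⟨c, by omega⟩
        · rw [if_neg hs]
          obtain ⟨c, hc⟩ := heven s hs
          exact ⟨c, by omega⟩
      choose γ hγc using hcoef
      have heq : ∑ s, α s • ℓ s = ℓ s₀ + ∑ s, (2 * γ s) • ℓ s := by
        calc ∑ s, α s • ℓ s
            = ∑ s, ((if s = s₀ then (1:ℤ) else 0) • ℓ s + (2 * γ s) • ℓ s) := by
              congr 1; ext s; rw [← add_smul, ← hγc]
          _ = ℓ s₀ + ∑ s, (2 * γ s) • ℓ s := by
              rw [Finset.sum_add_distrib]; congr 1; simp [ite_smul]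
      rw [heq]
      exact even_sum_mem ℓ h0 hK hgen γ _ (hgen s₀)
end

section
/- Let k₁, …, k_d ∈ ℤ^d be vectors whose determinant (as columns of a d×d integer matrix) equals ±1. Then the 2^d-element set consisting of all sums ∑_{j∈J} k_j over subsets J ⊆ {1,…,d} (including the empty sum 0) is saturating in ℤ^d, i.e. its closure under (m,n) ↦ 2m − n is all of ℤ^d. -/
/-- If the vectors `k₁, …, k_d ∈ ℤ^d`, viewed as columns of a `d × d` integer matrix,
have determinant `±1`, then the `2^d`-element set of all subset sums `∑_{j ∈ J} k_j`
(`J ⊆ {1, …, d}`, including the empty sum `0`) is saturating in `ℤ^d`: its closure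
under `(m, n) ↦ 2•m - n` is all of `ℤ^d`. -/
theorem subset_sums_saturating (d : ℕ) (k : Fin d → (Fin d → ℤ))
    (hdet : (Matrix.of fun i j => k j i).det = 1 ∨ (Matrix.of fun i j => k j i).det = -1) :
    ⋂₀ {K : Set (Fin d → ℤ) |
        {v : Fin d → ℤ | ∃ J : Finset (Fin d), v = ∑ j ∈ J, k j} ⊆ K ∧
        ∀ m ∈ K, ∀ n ∈ K, (2 : ℤ) • m - n ∈ K} = Set.univ := by
  apply Set.eq_univ_of_forall
  intro v
  rw [Set.mem_sInter]
  rintro K ⟨hS, hcl⟩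
  -- arithmetic progression lemma
  have prog : ∀ x w : Fin d → ℤ, x ∈ K → x + w ∈ K → ∀ a : ℤ, x + a • w ∈ K := by
    intro x w hx hxw a
    have key : ∀ a : ℤ, x + a • w ∈ K ∧ x + (a + 1) • w ∈ K := by
      intro a
      induction a using Int.induction_on with
      | zero => exact ⟨by simpa using hx, by simpa using hxw⟩
      | succ n ih =>
        refine ⟨ih.2, ?_⟩
        have h := hcl _ ih.2 _ ih.1
        convert h using 1
        module
      | pred n ih =>
        refine ⟨?_, by simpa using ih.1⟩
        have h := hcl _ ih.1 _ ih.2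
        convert h using 1
        module
    exact (key a).1
  -- main induction: partial integer combinations plus subset sums are in K
  have Q : ∀ r : ℕ, ∀ c : Fin d → ℤ, ∀ J : Finset (Fin d),
      (∀ j ∈ J, r ≤ (j : ℕ)) →
      (∑ j ∈ Finset.univ.filter (fun j : Fin d => (j : ℕ) < r), c j • k j)
        + ∑ j ∈ J, k j ∈ K := by
    intro r
    induction r with
    | zero =>
      intro c J hJ
      have h0 : (Finset.univ.filter (fun j : Fin d => (j : ℕ) < 0)) = ∅ := by simp
      rw [h0]
      simpa using hS ⟨J, rfl⟩
    | succ r ih =>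
      intro c J hJ
      by_cases hr : r < d
      · set jr : Fin d := ⟨r, hr⟩ with hjr
        have hjrJ : jr ∉ J := fun h => by
          have := hJ jr h
          simp [hjr] at this
        have h1 := ih c J (fun j hj => le_trans (Nat.le_succ r) (hJ j hj))
        have h2 := ih c (insert jr J) (by
          intro j hj
          rcases Finset.mem_insert.mp hj with h | h
          · simp [h, hjr]
          · exact le_trans (Nat.le_succ r) (hJ j h))
        rw [Finset.sum_insert hjrJ] at h2
        have h2' : ((∑ j ∈ Finset.univ.filter (fun j : Fin d => (j : ℕ) < r), c j • k j)
            + ∑ j ∈ J, k j) + k jr ∈ K := by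
          convert h2 using 1; abel
        have h3 := prog _ _ h1 h2' (c jr)
        have hfe : Finset.univ.filter (fun j : Fin d => (j : ℕ) < r + 1)
            = insert jr (Finset.univ.filter (fun j : Fin d => (j : ℕ) < r)) := by
          ext j
          simp [Finset.mem_insert, Fin.ext_iff, hjr]
          omega
        rw [hfe, Finset.sum_insert (by simp [hjr])]
        convert h3 using 1
        abel
      · have hfe : Finset.univ.filter (fun j : Fin d => (j : ℕ) < r + 1)
            = Finset.univ.filter (fun j : Fin d => (j : ℕ) < r) := by
          ext j
          have := j.isLt
          simp
          omega
        rw [hfe]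
        exact ih c J (fun j hj => le_trans (Nat.le_succ r) (hJ j hj))
  -- conclude using invertibility
  set M : Matrix (Fin d) (Fin d) ℤ := Matrix.of fun i j => k j i with hM
  have hu : IsUnit M.det := by
    rcases hdet with h | h <;> simp [Int.isUnit_iff, h]
  set c : Fin d → ℤ := M⁻¹.mulVec v with hc
  have hv : v = ∑ j : Fin d, c j • k j := by
    have h1 : M.mulVec c = v := by
      rw [hc, Matrix.mulVec_mulVec, Matrix.mul_nonsing_inv _ hu, Matrix.one_mulVec]
    funext i
    rw [← h1]
    simp [Matrix.mulVec, dotProduct, Finset.sum_apply, hM, mul_comm]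
  have hfull : Finset.univ.filter (fun j : Fin d => (j : ℕ) < d) = Finset.univ := by
    ext j; simp [j.isLt]
  have := Q d c ∅ (by simp)
  rw [hfull, Finset.sum_empty, add_zero, ← hv] at this
  exact this
end

section
/- The set of all vertices of the unit cube, i.e. all vectors in ℤ^d with every coordinate equal to 0 or 1, is saturating in ℤ^d: its closure under the operation (m,n) ↦ 2m − n equals ℤ^d. -/
lemma cube_aux (a r : ℤ) (hr : r = 0 ∨ r = 1) (hpar : Even (a + r)) :
    ((a + r) / 2).natAbs ≤ a.natAbs ∧ (¬(a = 0 ∨ a = 1) → ((a + r) / 2).natAbs < a.natAbs) := by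
  rcases hpar with ⟨k, hk⟩
  omega

/-- The set of vertices of the unit cube (all vectors in `ℤ^d` with coordinates `0` or `1`)
is saturating in `ℤ^d`: its closure under `(m, n) ↦ 2•m - n` equals `ℤ^d`. -/
theorem cube_vertices_saturating (d : ℕ) :
    ⋂₀ {K : Set (Fin d → ℤ) |
        {v : Fin d → ℤ | ∀ i, v i = 0 ∨ v i = 1} ⊆ K ∧
        ∀ m ∈ K, ∀ n ∈ K, (2 : ℤ) • m - n ∈ K} = Set.univ := by
  ext v
  simp only [Set.mem_sInter, Set.mem_setOf_eq, Set.mem_univ, iff_true]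
  intro K hK
  obtain ⟨h1, h2⟩ := hK
  suffices h : ∀ n : ℕ, ∀ v : Fin d → ℤ, (∑ i, (v i).natAbs) = n → v ∈ K from
    h _ v rfl
  intro n
  induction n using Nat.strong_induction_on with
  | _ n ih =>
    intro v hv
    by_cases hc : ∀ i, v i = 0 ∨ v i = 1
    · exact h1 hc
    · push_neg at hc
      set r : Fin d → ℤ := fun i => if Even (v i) then 0 else 1 with hrdef
      have hr : ∀ i, r i = 0 ∨ r i = 1 := by
        intro i; simp only [hrdef]; split <;> simp
      have hpar : ∀ i, Even (v i + r i) := by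
        intro i; simp only [hrdef]
        rcases Int.even_or_odd (v i) with ⟨k, hk⟩ | ⟨k, hk⟩
        · rw [if_pos ⟨k, hk⟩]; exact ⟨k, by omega⟩
        · rw [if_neg (by rw [Int.even_iff]; omega)]
          exact ⟨k + 1, by omega⟩
      set w : Fin d → ℤ := fun i => (v i + r i) / 2 with hwdef
      have key : ∀ i, (w i).natAbs ≤ (v i).natAbs ∧
          (¬(v i = 0 ∨ v i = 1) → (w i).natAbs < (v i).natAbs) :=
        fun i => cube_aux (v i) (r i) (hr i) (hpar i)
      have hlt : (∑ i, (w i).natAbs) < n := by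
        rw [← hv]
        obtain ⟨i0, hi0⟩ := hc
        apply Finset.sum_lt_sum (fun i _ => (key i).1)
        exact ⟨i0, Finset.mem_univ _, (key i0).2 (by tauto)⟩
      have hw : w ∈ K := ih _ hlt w rfl
      have hrK : r ∈ K := h1 hr
      have : (2 : ℤ) • w - r ∈ K := h2 w hw r hrK
      convert this using 1
      funext i
      simp only [Pi.sub_apply, Pi.smul_apply, smul_eq_mul, hwdef]
      rcases hpar i with ⟨k, hk⟩
      omega
end
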